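/- The variety of groups does not have the finite embeddability property: there exist a group G and a finite subset S ⊆ G such that for every finite group E there is no injective map f : S → E satisfying all of: f (a * b) = f a * f b for all a, b ∈ S with a * b ∈ S; f (a⁻¹) = (f a)⁻¹ for all a ∈ S with a⁻¹ ∈ S; and f 1 = 1 whenever 1 ∈ S. -/

import Mathlib

private def tFun (p : ℤ × ℕ) : ℤ × ℕ :=
  (3 * (p.1 / 2) + ((2 * p.2 + (p.1 % 2).toNat) % 3 : ℕ), (2 * p.2 + (p.1 % 2).toNat) / 3)

private def tInvFun (q : ℤ × ℕ) : ℤ × ℕ :=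
  (2 * (q.1 / 3) + ((3 * q.2 + (q.1 % 3).toNat) % 2 : ℕ), (3 * q.2 + (q.1 % 3).toNat) / 2)

private def aPerm : Equiv.Perm (ℤ × ℕ) where
  toFun p := (p.1 + 1, p.2)
  invFun p := (p.1 - 1, p.2)
  left_inv p := by simp
  right_inv p := by simp

private def tPerm : Equiv.Perm (ℤ × ℕ) where
  toFun := tFun
  invFun := tInvFun
  left_inv p := by
    obtain ⟨x, n⟩ := p
    simp only [tFun, tInvFun]
    have h1 : (3 * (x / 2) + (((2 * n + (x % 2).toNat) % 3 : ℕ) : ℤ)) % 3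
        = (((2 * n + (x % 2).toNat) % 3 : ℕ) : ℤ) := by omega
    ext <;> simp only [h1] <;> omega
  right_inv q := by
    obtain ⟨y, m⟩ := q
    simp only [tFun, tInvFun]
    have h1 : (2 * (y / 3) + (((3 * m + (y % 3).toNat) % 2 : ℕ) : ℤ)) % 2
        = (((3 * m + (y % 3).toNat) % 2 : ℕ) : ℤ) := by omega
    ext <;> simp only [h1] <;> omega

/-- the Baumslag–Solitar relation `t a² t⁻¹ = a³` holds for our permutations -/
private theorem relBS : tPerm * aPerm ^ 2 * tPerm⁻¹ = aPerm ^ 3 := by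
  rw [mul_inv_eq_iff_eq_mul]
  ext p <;>
  · obtain ⟨x, n⟩ := p
    simp [tPerm, aPerm, tFun, Equiv.Perm.mul_apply, pow_succ, Equiv.coe_fn_mk]
    omega

/-- but `t a t⁻¹` does not commute with `a` -/
private theorem noncommBS :
    (tPerm * aPerm * tPerm⁻¹) * aPerm ≠ aPerm * (tPerm * aPerm * tPerm⁻¹) := by
  intro h
  have := congrArg (fun e : Equiv.Perm (ℤ × ℕ) => e ((0 : ℤ), (0 : ℕ))) h
  simp only [Equiv.Perm.mul_apply, Equiv.Perm.inv_def] at this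
  rw [show (tPerm.symm : Equiv.Perm (ℤ × ℕ)) = ⟨tInvFun, tFun, tPerm.right_inv, tPerm.left_inv⟩
      from rfl] at this
  simp only [show ∀ p, (⟨tInvFun, tFun, tPerm.right_inv, tPerm.left_inv⟩ : Equiv.Perm (ℤ × ℕ)) p = tInvFun p from fun _ => rfl] at this
  simp [aPerm, tPerm, tFun, tInvFun] at this

/-- In a finite group, `T A² T⁻¹ = A³` forces `T A T⁻¹` to commute with `A`. -/
private theorem finite_group_comm {E : Type} [Group E] [Finite E] (A T : E)
    (hrel0 : T * (A * A) * T⁻¹ = A * A * A) : (T * A * T⁻¹) * A = A * (T * A * T⁻¹) := by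
  have hrel : T * A ^ 2 * T⁻¹ = A ^ 3 := by
    rw [sq, show A ^ 3 = A * A * A from by rw [pow_succ, pow_succ, pow_one]]; exact hrel0
  have hsc : SemiconjBy T (A ^ 2) (A ^ 3) := by
    unfold SemiconjBy
    rw [← hrel]; group
  set n := orderOf A with hn
  have hpos : 0 < n := orderOf_pos A
  have horder : orderOf (A ^ 2) = orderOf (A ^ 3) := hsc.orderOf_eq T
  have key : n / n.gcd 2 = n / n.gcd 3 := by
    rw [← orderOf_pow A, ← orderOf_pow A, horder]
  have hg2 : n.gcd 2 ∣ 2 := Nat.gcd_dvd_right n 2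
  have hg3 : n.gcd 3 ∣ 3 := Nat.gcd_dvd_right n 3
  have hg2' : n.gcd 2 ∣ n := Nat.gcd_dvd_left n 2
  have hg3' : n.gcd 3 ∣ n := Nat.gcd_dvd_left n 3
  have hodd : n.gcd 2 = 1 := by
    rcases (Nat.dvd_prime Nat.prime_two).mp hg2 with h | h
    · exact h
    exfalso
    have h2n : 2 ∣ n := h ▸ hg2'
    obtain ⟨k, hk⟩ := h2n
    rcases (Nat.dvd_prime Nat.prime_three).mp hg3 with h' | h'
    · rw [h, h'] at key; omega
    · have h3n : 3 ∣ n := h' ▸ hg3'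
      obtain ⟨l, hl⟩ := h3n
      rw [h, h'] at key; omega
  have hO : Odd n := Nat.coprime_two_right.mp hodd
  obtain ⟨k, hk⟩ := hO
  have hA : (A ^ 2) ^ ((n + 1) / 2) = A := by
    rw [← pow_mul]
    have h2e : 2 * ((n + 1) / 2) = n + 1 := by omega
    rw [h2e, pow_succ, pow_orderOf_eq_one, one_mul]
  have hTA : T * A * T⁻¹ = A ^ (3 * ((n + 1) / 2)) := by
    conv_lhs => rw [← hA]
    rw [← conj_pow, hrel, ← pow_mul]
  rw [hTA]
  exact (Commute.refl A).pow_left _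

/-- The variety of groups does not have the finite embeddability property:
there are a group `G` and a finite subset `S ⊆ G` such that the relative partial
subgroup induced on `S` does not embed into any finite group. -/
theorem groups_not_fep :
    ∃ (G : Type) (_ : Group G) (S : Set G), S.Finite ∧
      ∀ (E : Type) [Group E] [Finite E],
        ¬ ∃ f : S → E,
            Function.Injective f ∧
            (∀ (a b : S) (h : (a : G) * (b : G) ∈ S), f ⟨(a : G) * (b : G), h⟩ = f a * f b) ∧
            (∀ (a : S) (h : (a : G)⁻¹ ∈ S), f ⟨(a : G)⁻¹, h⟩ = (f a)⁻¹) ∧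
            (∀ h : (1 : G) ∈ S, f ⟨1, h⟩ = 1) := by
  set G := Equiv.Perm (ℤ × ℕ) with hG
  set a := aPerm with hadef
  set t := tPerm with htdef
  set u : G := t * a * t⁻¹ with hudef
  set S : Set G := {1, a, a⁻¹, a * a, a * a * a, t, t⁻¹, t * a, t * a * a,
    u, u⁻¹, u * a, u * a * u⁻¹, u * a * u⁻¹ * a⁻¹} with hS
  refine ⟨G, inferInstance, S, ?_, ?_⟩
  · rw [hS]
    repeat apply Set.Finite.insert
    exact Set.finite_singleton _
  intro E _ _ ⟨f, hinj, hmul, hinv, hone⟩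
  -- membership facts
  have h1 : (1 : G) ∈ S := by rw [hS]; exact Set.mem_insert _ _
  have ha : a ∈ S := by rw [hS]; exact Set.mem_insert_of_mem _ (Set.mem_insert _ _)
  have hai : a⁻¹ ∈ S := by rw [hS]; exact Set.mem_insert_of_mem _ (Set.mem_insert_of_mem _ (Set.mem_insert _ _))
  have haa : a * a ∈ S := by rw [hS]; exact Set.mem_insert_of_mem _ (Set.mem_insert_of_mem _ (Set.mem_insert_of_mem _ (Set.mem_insert _ _)))
  have haaa : a * a * a ∈ S := by rw [hS]; exact Set.mem_insert_of_mem _ (Set.mem_insert_of_mem _ (Set.mem_insert_of_mem _ (Set.mem_insert_of_mem _ (Set.mem_insert _ _))))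
  have ht : t ∈ S := by rw [hS]; exact Set.mem_insert_of_mem _ (Set.mem_insert_of_mem _ (Set.mem_insert_of_mem _ (Set.mem_insert_of_mem _ (Set.mem_insert_of_mem _ (Set.mem_insert _ _)))))
  have hti : t⁻¹ ∈ S := by rw [hS]; exact Set.mem_insert_of_mem _ (Set.mem_insert_of_mem _ (Set.mem_insert_of_mem _ (Set.mem_insert_of_mem _ (Set.mem_insert_of_mem _ (Set.mem_insert_of_mem _ (Set.mem_insert _ _))))))
  have hta : t * a ∈ S := by rw [hS]; exact Set.mem_insert_of_mem _ (Set.mem_insert_of_mem _ (Set.mem_insert_of_mem _ (Set.mem_insert_of_mem _ (Set.mem_insert_of_mem _ (Set.mem_insert_of_mem _ (Set.mem_insert_of_mem _ (Set.mem_insert _ _)))))))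
  have htaa : t * a * a ∈ S := by rw [hS]; exact Set.mem_insert_of_mem _ (Set.mem_insert_of_mem _ (Set.mem_insert_of_mem _ (Set.mem_insert_of_mem _ (Set.mem_insert_of_mem _ (Set.mem_insert_of_mem _ (Set.mem_insert_of_mem _ (Set.mem_insert_of_mem _ (Set.mem_insert _ _))))))))
  have hu : u ∈ S := by rw [hS]; exact Set.mem_insert_of_mem _ (Set.mem_insert_of_mem _ (Set.mem_insert_of_mem _ (Set.mem_insert_of_mem _ (Set.mem_insert_of_mem _ (Set.mem_insert_of_mem _ (Set.mem_insert_of_mem _ (Set.mem_insert_of_mem _ (Set.mem_insert_of_mem _ (Set.mem_insert _ _)))))))))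
  have hui : u⁻¹ ∈ S := by rw [hS]; exact Set.mem_insert_of_mem _ (Set.mem_insert_of_mem _ (Set.mem_insert_of_mem _ (Set.mem_insert_of_mem _ (Set.mem_insert_of_mem _ (Set.mem_insert_of_mem _ (Set.mem_insert_of_mem _ (Set.mem_insert_of_mem _ (Set.mem_insert_of_mem _ (Set.mem_insert_of_mem _ (Set.mem_insert _ _))))))))))
  have hua : u * a ∈ S := by rw [hS]; exact Set.mem_insert_of_mem _ (Set.mem_insert_of_mem _ (Set.mem_insert_of_mem _ (Set.mem_insert_of_mem _ (Set.mem_insert_of_mem _ (Set.mem_insert_of_mem _ (Set.mem_insert_of_mem _ (Set.mem_insert_of_mem _ (Set.mem_insert_of_mem _ (Set.mem_insert_of_mem _ (Set.mem_insert_of_mem _ (Set.mem_insert _ _)))))))))))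
  have huau : u * a * u⁻¹ ∈ S := by rw [hS]; exact Set.mem_insert_of_mem _ (Set.mem_insert_of_mem _ (Set.mem_insert_of_mem _ (Set.mem_insert_of_mem _ (Set.mem_insert_of_mem _ (Set.mem_insert_of_mem _ (Set.mem_insert_of_mem _ (Set.mem_insert_of_mem _ (Set.mem_insert_of_mem _ (Set.mem_insert_of_mem _ (Set.mem_insert_of_mem _ (Set.mem_insert_of_mem _ (Set.mem_insert _ _))))))))))))
  have hc : u * a * u⁻¹ * a⁻¹ ∈ S := by rw [hS]; exact Set.mem_insert_of_mem _ (Set.mem_insert_of_mem _ (Set.mem_insert_of_mem _ (Set.mem_insert_of_mem _ (Set.mem_insert_of_mem _ (Set.mem_insert_of_mem _ (Set.mem_insert_of_mem _ (Set.mem_insert_of_mem _ (Set.mem_insert_of_mem _ (Set.mem_insert_of_mem _ (Set.mem_insert_of_mem _ (Set.mem_insert_of_mem _ (Set.mem_insert_of_mem _ (Set.mem_singleton _)))))))))))))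
  -- the relation in G
  have hrelG : t * a * a * t⁻¹ = a * a * a := by
    have h := relBS
    rw [show aPerm ^ 2 = aPerm * aPerm from pow_two aPerm,
      show aPerm ^ 3 = aPerm * aPerm * aPerm from by rw [pow_succ, pow_succ, pow_one]] at h
    rw [hadef, htdef, mul_assoc tPerm aPerm aPerm]
    exact h
  -- a helper for rewriting subtype arguments of f
  have fcongr : ∀ (x y : G) (hx : x ∈ S) (hy : y ∈ S), x = y → f ⟨x, hx⟩ = f ⟨y, hy⟩ := by
    intro x y hx hy hxy
    cases hxy
    rfl
  set A := f ⟨a, ha⟩ with hA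
  set T := f ⟨t, ht⟩ with hT
  -- compute values of f step by step
  have fai : f ⟨a⁻¹, hai⟩ = A⁻¹ := hinv ⟨a, ha⟩ hai
  have fti : f ⟨t⁻¹, hti⟩ = T⁻¹ := hinv ⟨t, ht⟩ hti
  have faa : f ⟨a * a, haa⟩ = A * A := hmul ⟨a, ha⟩ ⟨a, ha⟩ haa
  have faaa : f ⟨a * a * a, haaa⟩ = A * A * A := by
    rw [hmul ⟨a * a, haa⟩ ⟨a, ha⟩ haaa, faa]
  have fta : f ⟨t * a, hta⟩ = T * A := hmul ⟨t, ht⟩ ⟨a, ha⟩ hta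
  have ftaa : f ⟨t * a * a, htaa⟩ = T * A * A := by
    rw [hmul ⟨t * a, hta⟩ ⟨a, ha⟩ htaa, fta]
  -- the relation transfers to E
  have hrelmem : (t * a * a) * t⁻¹ ∈ S := hrelG ▸ haaa
  have hrelE : T * (A * A) * T⁻¹ = A * A * A := by
    have e1 : f ⟨(t * a * a) * t⁻¹, hrelmem⟩ = T * A * A * T⁻¹ := by
      rw [hmul ⟨t * a * a, htaa⟩ ⟨t⁻¹, hti⟩ hrelmem, ftaa, fti]
    have e2 : f ⟨(t * a * a) * t⁻¹, hrelmem⟩ = A * A * A := by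
      rw [fcongr _ _ hrelmem haaa hrelG, faaa]
    rw [← mul_assoc]
    rw [e1] at e2
    exact e2
  -- the image of u
  have humem : (t * a) * t⁻¹ ∈ S := hu
  have fu : f ⟨u, hu⟩ = T * A * T⁻¹ := by
    have := hmul ⟨t * a, hta⟩ ⟨t⁻¹, hti⟩ humem
    rw [fta, fti] at this
    exact this
  set U : E := T * A * T⁻¹ with hU
  have fui : f ⟨u⁻¹, hui⟩ = U⁻¹ := by rw [hinv ⟨u, hu⟩ hui, fu]
  have fua : f ⟨u * a, hua⟩ = U * A := by rw [hmul ⟨u, hu⟩ ⟨a, ha⟩ hua, fu]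
  have fuau : f ⟨u * a * u⁻¹, huau⟩ = U * A * U⁻¹ := by
    rw [hmul ⟨u * a, hua⟩ ⟨u⁻¹, hui⟩ huau, fua, fui]
  have fc : f ⟨u * a * u⁻¹ * a⁻¹, hc⟩ = U * A * U⁻¹ * A⁻¹ := by
    rw [hmul ⟨u * a * u⁻¹, huau⟩ ⟨a⁻¹, hai⟩ hc, fuau, fai]
  -- the commutation in E
  have hcomm : U * A = A * U := finite_group_comm A T hrelE
  have fc1 : f ⟨u * a * u⁻¹ * a⁻¹, hc⟩ = 1 := by
    rw [fc, hcomm]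
    group
  have : f ⟨u * a * u⁻¹ * a⁻¹, hc⟩ = f ⟨1, h1⟩ := by rw [fc1, hone h1]
  have hceq : u * a * u⁻¹ * a⁻¹ = 1 := Subtype.ext_iff.mp (hinj this)
  apply noncommBS
  rw [mul_inv_eq_one, mul_inv_eq_iff_eq_mul] at hceq
  rw [hudef, hadef, htdef] at hceq
  exact hceq
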